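/- Fix an integer n ≥ 2. There exists a constant c > 0 (depending only on n) such that for every integer H ≥ 2, the number of tuples (r_1, s_1, …, r_n, s_n) of integers with H ≥ r_j > s_j ≥ 0 and gcd(r_j, s_j) = 1 for all j, satisfying ∑_{j=1}^n s_j/r_j = 1, is at least c · H^n. -/

import Mathlib

lemma sum_sq_inv_aux : ∀ A : ℕ, 2 ≤ A → ∑ d ∈ Finset.Icc 3 A, (1:ℝ)/(d:ℝ)^2 ≤ 1/2 - 1/A := by
  intro A hA
  induction A, hA using Nat.le_induction with
  | base => simp
  | succ A hA ih =>
    rw [Finset.sum_Icc_succ_top (by omega)]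
    have h1 : (0:ℝ) < A := by positivity
    have h2 : (0:ℝ) < (A:ℝ) + 1 := by positivity
    have : (1:ℝ)/((A:ℝ)+1)^2 ≤ 1/A - 1/(A+1) := by
      rw [div_sub_div _ _ (ne_of_gt h1) (ne_of_gt h2)]
      rw [div_le_div_iff₀ (by positivity) (by positivity)]
      ring_nf
      nlinarith
    push_cast
    linarith

lemma sum_sq_inv_le (A : ℕ) : ∑ d ∈ Finset.Icc 2 A, (1:ℝ)/(d:ℝ)^2 ≤ 3/4 := by
  rcases le_or_gt 2 A with h | h
  · have e1 : Finset.Icc 2 A = insert 2 (Finset.Icc 3 A) := by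
      ext x; simp only [Finset.mem_Icc, Finset.mem_insert]; omega
    rw [e1, Finset.sum_insert (by simp)]
    have h5 := sum_sq_inv_aux A h
    have hA : (0:ℝ) < A := by positivity
    have h6 : (0:ℝ) ≤ 1/A := by positivity
    have h7 : (1:ℝ)/((2:ℕ):ℝ)^2 = 1/4 := by norm_num
    linarith
  · rw [Finset.Icc_eq_empty (by omega)]
    norm_num

lemma sum_inv_le (A : ℕ) : ∑ d ∈ Finset.Icc 2 A, (1:ℝ)/(d:ℝ) ≤ 2*Real.sqrt A := by
  induction A with
  | zero => simp
  | succ A ih =>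
    rcases le_or_gt 2 (A+1) with h | h
    · rw [Finset.sum_Icc_succ_top h]
      have hs : Real.sqrt A ≤ Real.sqrt (A+1) := by
        apply Real.sqrt_le_sqrt; push_cast; linarith
      have h1 : Real.sqrt ((A:ℝ)+1) * Real.sqrt ((A:ℝ)+1) = (A:ℝ)+1 :=
        Real.mul_self_sqrt (by positivity)
      have h2 : Real.sqrt (A:ℝ) * Real.sqrt (A:ℝ) = (A:ℝ) :=
        Real.mul_self_sqrt (by positivity)
      have h3 : Real.sqrt ((A:ℝ)+1) ≤ (A:ℝ)+1 := by
        nlinarith [Real.sqrt_nonneg ((A:ℝ)+1)]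
      have h4 : (1:ℝ)/((A:ℝ)+1) ≤ 2*(Real.sqrt ((A:ℝ)+1) - Real.sqrt (A:ℝ)) := by
        rw [div_le_iff₀ (by positivity)]
        nlinarith [Real.sqrt_nonneg (A:ℝ)]
      push_cast
      push_cast at ih
      linarith
    · have : A = 0 := by omega
      subst this
      rw [Finset.Icc_eq_empty (by omega)]
      simp


lemma count_dvd_Ioc (a b d : ℕ) (hab : a ≤ b) :
    ((Finset.Ioc a b).filter (d ∣ ·)).card = b/d - a/d := by
  have hu : Finset.Ioc 0 a ∪ Finset.Ioc a b = Finset.Ioc 0 b :=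
    Finset.Ioc_union_Ioc_eq_Ioc (Nat.zero_le a) hab
  have hd : Disjoint ((Finset.Ioc 0 a).filter (d ∣ ·)) ((Finset.Ioc a b).filter (d ∣ ·)) := by
    rw [Finset.disjoint_left]
    intro x hx hy
    simp only [Finset.mem_filter, Finset.mem_Ioc] at hx hy
    omega
  have : ((Finset.Ioc 0 a).filter (d ∣ ·)).card + ((Finset.Ioc a b).filter (d ∣ ·)).card
      = ((Finset.Ioc 0 b).filter (d ∣ ·)).card := by
    rw [← Finset.card_union_of_disjoint hd, ← Finset.filter_union, hu]
  rw [Nat.Ioc_filter_dvd_card_eq_div, Nat.Ioc_filter_dvd_card_eq_div] at this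
  omega

lemma cast_div_ge {a d : ℕ} (hd : 0 < d) : (a:ℝ)/d - 1 ≤ ((a/d : ℕ) : ℝ) := by
  have e : d * (a/d) + a % d = a := Nat.div_add_mod a d
  have hm : a % d < d := Nat.mod_lt a hd
  have e' : (d:ℝ) * ((a/d : ℕ):ℝ) + ((a % d : ℕ):ℝ) = a := by exact_mod_cast e
  have hm' : ((a % d : ℕ):ℝ) < d := by exact_mod_cast hm
  have hd' : (0:ℝ) < d := by exact_mod_cast hd
  rw [sub_le_iff_le_add, div_le_iff₀ hd']
  nlinarith


lemma coprime_count (A H : ℕ) (hA : 1 ≤ A) (hAH : A ≤ H) (hH : 4096 ≤ H) :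
    (A:ℝ)*H/16 ≤ (((Finset.Ioc 0 A ×ˢ Finset.Ioc (H/2) H).filter
      (fun p => Nat.gcd p.1 p.2 = 1)).card : ℝ) := by
  classical
  set P := Finset.Ioc 0 A ×ˢ Finset.Ioc (H/2) H with hP
  have htot : P.card = A * (H - H/2) := by
    rw [hP, Finset.card_product, Nat.card_Ioc, Nat.card_Ioc]
    simp
  have hsplit : (P.filter fun p => Nat.gcd p.1 p.2 = 1).card
      + (P.filter fun p => ¬ Nat.gcd p.1 p.2 = 1).card = P.card :=
    Finset.card_filter_add_card_filter_not _
  have hsub : (P.filter fun p => ¬ Nat.gcd p.1 p.2 = 1) ⊆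
      (Finset.Icc 2 A).biUnion (fun d =>
        ((Finset.Ioc 0 A).filter (d ∣ ·)) ×ˢ ((Finset.Ioc (H/2) H).filter (d ∣ ·))) := by
    intro p hp
    simp only [hP, Finset.mem_filter, Finset.mem_product, Finset.mem_Ioc] at hp
    obtain ⟨⟨⟨h1, h2⟩, h3, h4⟩, hg⟩ := hp
    have hg1 : 0 < Nat.gcd p.1 p.2 := Nat.gcd_pos_of_pos_left _ h1
    have hgA : Nat.gcd p.1 p.2 ≤ p.1 := Nat.le_of_dvd h1 (Nat.gcd_dvd_left _ _)
    rw [Finset.mem_biUnion]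
    refine ⟨Nat.gcd p.1 p.2, ?_, ?_⟩
    · rw [Finset.mem_Icc]; omega
    · rw [Finset.mem_product, Finset.mem_filter, Finset.mem_filter, Finset.mem_Ioc,
        Finset.mem_Ioc]
      exact ⟨⟨⟨h1, h2⟩, Nat.gcd_dvd_left _ _⟩, ⟨⟨h3, h4⟩, Nat.gcd_dvd_right _ _⟩⟩
  have hbad : (P.filter fun p => ¬ Nat.gcd p.1 p.2 = 1).card
      ≤ ∑ d ∈ Finset.Icc 2 A, (A/d) * (H/d - (H/2)/d) := by
    refine le_trans (Finset.card_le_card hsub) (le_trans Finset.card_biUnion_le ?_)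
    refine Finset.sum_le_sum fun d hd => ?_
    rw [Finset.card_product, count_dvd_Ioc _ _ _ (Nat.div_le_self H 2)]
    have : ((Finset.Ioc 0 A).filter (d ∣ ·)).card = A / d :=
      Nat.Ioc_filter_dvd_card_eq_div A d
    rw [this]
  -- real bounds
  have key : ∀ d ∈ Finset.Icc 2 A,
      (((A/d) * (H/d - (H/2)/d) : ℕ) : ℝ) ≤ (A:ℝ)*H/2 * (1/(d:ℝ)^2) + 2*A*(1/(d:ℝ)) := by
    intro d hd
    rw [Finset.mem_Icc] at hd
    have hd0 : 0 < d := by omega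
    have hd' : (2:ℝ) ≤ d := by exact_mod_cast hd.1
    have hd0' : (0:ℝ) < d := by linarith
    have hx : ((A/d : ℕ):ℝ) ≤ (A:ℝ)/d := Nat.cast_div_le
    have hx0 : (0:ℝ) ≤ ((A/d : ℕ):ℝ) := Nat.cast_nonneg _
    have hmono : (H/2)/d ≤ H/d := Nat.div_le_div_right (Nat.div_le_self H 2)
    have hy1 : ((H/d - (H/2)/d : ℕ):ℝ) = ((H/d : ℕ):ℝ) - (((H/2)/d : ℕ):ℝ) :=
      Nat.cast_sub hmono
    have hy2 : ((H/d : ℕ):ℝ) ≤ (H:ℝ)/d := Nat.cast_div_le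
    have hy3 : ((H/2 : ℕ):ℝ)/d - 1 ≤ (((H/2)/d : ℕ):ℝ) := cast_div_ge hd0
    have hy4 : (H:ℝ)/2 - 1 ≤ ((H/2 : ℕ):ℝ) := by
      have h := cast_div_ge (a := H) (d := 2) (by norm_num)
      exact_mod_cast h
    have hy : ((H/d - (H/2)/d : ℕ):ℝ) ≤ (H:ℝ)/(2*d) + 2 := by
      have h5 : ((H:ℝ)/2 - 1)/d ≤ ((H/2 : ℕ):ℝ)/d := by gcongr
      have h6 : ((H:ℝ)/2 - 1)/d - 1 ≤ (((H/2)/d : ℕ):ℝ) := by linarith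
      rw [hy1]
      have e1 : (H:ℝ)/d - (((H:ℝ)/2 - 1)/d - 1) = ((H:ℝ)/2 + 1)/d + 1 := by
        field_simp
        ring
      have e2 : ((H:ℝ)/2 + 1)/d ≤ (H:ℝ)/(2*d) + 1 := by
        rw [div_le_iff₀ hd0']
        have e3 : ((H:ℝ)/(2*d) + 1)*d = (H:ℝ)/2 + d := by
          field_simp
        rw [e3]
        linarith
      linarith
    have hy0 : (0:ℝ) ≤ ((H/d - (H/2)/d : ℕ):ℝ) := Nat.cast_nonneg _
    have hmul : (((A/d) * (H/d - (H/2)/d) : ℕ) : ℝ)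
        ≤ ((A:ℝ)/d) * ((H:ℝ)/(2*d) + 2) := by
      rw [Nat.cast_mul]
      exact mul_le_mul hx hy hy0 (by positivity)
    refine hmul.trans (le_of_eq ?_)
    field_simp
  -- sum the bound
  have hbadR : ((P.filter fun p => ¬ Nat.gcd p.1 p.2 = 1).card : ℝ)
      ≤ (A:ℝ)*H/2 * (3/4) + 2*A*(2*Real.sqrt H) := by
    have h1 : ((P.filter fun p => ¬ Nat.gcd p.1 p.2 = 1).card : ℝ)
        ≤ ((∑ d ∈ Finset.Icc 2 A, (A/d) * (H/d - (H/2)/d) : ℕ) : ℝ) := by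
      exact_mod_cast hbad
    rw [Nat.cast_sum] at h1
    have h2 : (∑ d ∈ Finset.Icc 2 A, (((A/d) * (H/d - (H/2)/d) : ℕ) : ℝ))
        ≤ ∑ d ∈ Finset.Icc 2 A, ((A:ℝ)*H/2 * (1/(d:ℝ)^2) + 2*A*(1/(d:ℝ))) :=
      Finset.sum_le_sum key
    rw [Finset.sum_add_distrib, ← Finset.mul_sum, ← Finset.mul_sum] at h2
    have h3 := sum_sq_inv_le A
    have h4 := sum_inv_le A
    have hsA : Real.sqrt A ≤ Real.sqrt H := Real.sqrt_le_sqrt (by exact_mod_cast hAH)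
    have hc1 : (0:ℝ) ≤ (A:ℝ)*H/2 := by positivity
    have hc2 : (0:ℝ) ≤ 2*(A:ℝ) := by positivity
    nlinarith [mul_le_mul_of_nonneg_left h3 hc1, mul_le_mul_of_nonneg_left h4 hc2,
      mul_le_mul_of_nonneg_left hsA hc2]
  -- total
  have htotR : (A:ℝ)*((H:ℝ)/2) ≤ (P.card : ℝ) := by
    rw [htot, Nat.cast_mul]
    have : ((H - H/2 : ℕ):ℝ) = (H:ℝ) - ((H/2:ℕ):ℝ) := Nat.cast_sub (Nat.div_le_self H 2)
    rw [this]
    have h2 : ((H/2:ℕ):ℝ) ≤ (H:ℝ)/2 := Nat.cast_div_le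
    have hA0 : (0:ℝ) ≤ A := Nat.cast_nonneg _
    nlinarith
  -- sqrt bound
  have hsH : Real.sqrt H ≤ (H:ℝ)/64 := by
    have h64 : (64:ℝ) ≤ Real.sqrt H := by
      have : (64:ℝ) = Real.sqrt 4096 := by
        rw [show (4096:ℝ) = 64^2 by norm_num, Real.sqrt_sq (by norm_num)]
      rw [this]
      exact Real.sqrt_le_sqrt (by exact_mod_cast hH)
    have hss : Real.sqrt H * Real.sqrt H = (H:ℝ) := Real.mul_self_sqrt (Nat.cast_nonneg _)
    nlinarith [Real.sqrt_nonneg (H:ℝ)]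
  -- finish
  have hCsplit : ((P.filter fun p => Nat.gcd p.1 p.2 = 1).card : ℝ)
      = (P.card : ℝ) - ((P.filter fun p => ¬ Nat.gcd p.1 p.2 = 1).card : ℝ) := by
    have := hsplit
    push_cast [← this]
    ring
  rw [hCsplit]
  have hA0 : (1:ℝ) ≤ (A:ℝ) := by exact_mod_cast hA
  have hH0 : (0:ℝ) ≤ (H:ℝ) := Nat.cast_nonneg _
  nlinarith [mul_le_mul_of_nonneg_left hsH (by positivity : (0:ℝ) ≤ 4*(A:ℝ))]


def wext (k : ℕ) (v : Fin k → ℕ) : ℕ → ℕ := fun i => if h : i < k then v ⟨i, h⟩ else 0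

def nume (k a₀ b : ℕ) (v : Fin k → ℕ) : ℕ → ℕ := fun i =>
  if i = 0 then a₀
  else if i ≤ k then wext k v (i - 1)
  else b - (a₀ + ∑ i ∈ Finset.range k, wext k v i)

lemma nume_zero (k a₀ b : ℕ) (v : Fin k → ℕ) : nume k a₀ b v 0 = a₀ := by simp [nume]

lemma nume_mid (k a₀ b : ℕ) (v : Fin k → ℕ) (i : ℕ) (h1 : 1 ≤ i) (h2 : i ≤ k) :
    nume k a₀ b v i = v ⟨i - 1, by omega⟩ := by
  unfold nume
  rw [if_neg (by omega), if_pos h2]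
  unfold wext
  rw [dif_pos (by omega)]

lemma nume_last (k a₀ b : ℕ) (v : Fin k → ℕ) :
    nume k a₀ b v (k+1) = b - (a₀ + ∑ i ∈ Finset.range k, wext k v i) := by
  unfold nume
  rw [if_neg (by omega), if_neg (by omega)]

lemma sum_wext_le (k A : ℕ) (v : Fin k → ℕ) (hv : ∀ i, v i ≤ A) :
    ∑ i ∈ Finset.range k, wext k v i ≤ k * A := by
  calc ∑ i ∈ Finset.range k, wext k v i ≤ ∑ i ∈ Finset.range k, A := by
        refine Finset.sum_le_sum fun i _ => ?_
        unfold wext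
        split
        · exact hv _
        · exact Nat.zero_le _
    _ = k * A := by rw [Finset.sum_const, Finset.card_range, smul_eq_mul]

lemma sum_nume (k a₀ b : ℕ) (v : Fin k → ℕ)
    (hb : a₀ + ∑ i ∈ Finset.range k, wext k v i ≤ b) :
    ∑ i ∈ Finset.range (k+2), nume k a₀ b v i = b := by
  rw [Finset.sum_range_succ, Finset.sum_range_succ']
  have hmid : ∑ i ∈ Finset.range k, nume k a₀ b v (i+1)
      = ∑ i ∈ Finset.range k, wext k v i := by
    refine Finset.sum_congr rfl fun i hi => ?_
    rw [Finset.mem_range] at hi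
    rw [nume_mid k a₀ b v (i+1) (by omega) (by omega)]
    unfold wext
    rw [dif_pos hi]
    congr 1
  rw [hmid, nume_zero, nume_last]
  omega

lemma nume_bounds (k a₀ b A h2 : ℕ) (v : Fin k → ℕ)
    (ha0 : 0 < a₀) (haA : a₀ ≤ A) (hv : ∀ i, 0 < v i ∧ v i ≤ A)
    (hkA : (k+2)*A ≤ h2) (hb : h2 < b) :
    ∀ i : ℕ, i ≤ k+1 → 0 < nume k a₀ b v i ∧ nume k a₀ b v i < b := by
  have hAk : A ≤ (k+2)*A := Nat.le_mul_of_pos_left A (by omega)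
  have hsw : ∑ i ∈ Finset.range k, wext k v i ≤ k * A :=
    sum_wext_le k A v (fun i => (hv i).2)
  have hkA2 : a₀ + k*A ≤ (k+2)*A := by nlinarith [haA]
  intro i hi
  rcases Nat.eq_zero_or_pos i with h0 | h0
  · subst h0
    rw [nume_zero]
    omega
  rcases Nat.lt_or_ge i (k+1) with hmid | hlast
  · rw [nume_mid k a₀ b v i h0 (by omega)]
    have := hv ⟨i - 1, by omega⟩
    omega
  · have : i = k+1 := by omega
    subst this
    rw [nume_last]
    omega

def phiMap (k : ℕ) (x : (ℕ × ℕ) × (Fin k → ℕ)) :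
    (Fin (k+2) → ℤ) × (Fin (k+2) → ℤ) :=
  (fun j => ((x.1.2 / Nat.gcd x.1.2 (nume k x.1.1 x.1.2 x.2 (j:ℕ)) : ℕ) : ℤ),
   fun j => ((nume k x.1.1 x.1.2 x.2 (j:ℕ) / Nat.gcd x.1.2 (nume k x.1.1 x.1.2 x.2 (j:ℕ)) : ℕ) : ℤ))


theorem farey_solutions_lower_bound (n : ℕ) (hn : 2 ≤ n) :
    ∃ c : ℝ, 0 < c ∧ ∀ H : ℕ, 2 ≤ H →
      c * (H : ℝ) ^ n ≤
        (Nat.card {rs : (Fin n → ℤ) × (Fin n → ℤ) //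
          (∀ j, 0 ≤ rs.2 j ∧ rs.2 j < rs.1 j ∧ rs.1 j ≤ (H : ℤ) ∧
            Int.gcd (rs.1 j) (rs.2 j) = 1) ∧
          ∑ j, (rs.2 j : ℚ) / (rs.1 j : ℚ) = 1} : ℝ) := by
  classical
  obtain ⟨k, rfl⟩ : ∃ k, n = k + 2 := ⟨n - 2, by omega⟩
  set m : ℝ := (4*(k+2) : ℝ) with hm
  have hm0 : (0:ℝ) < m := by positivity
  set H₀ : ℕ := 4096*(k+2) with hH₀
  set c₁ : ℝ := (1/16) * (1/m)^(k+1) with hc₁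
  set c₂ : ℝ := (1/(H₀:ℝ))^(k+2) with hc₂
  have hH₀0 : (0:ℝ) < (H₀:ℝ) := by positivity
  refine ⟨min c₁ c₂, lt_min (by positivity) (by positivity), ?_⟩
  intro H hH
  -- the solution set is finite
  have hfin : {rs : (Fin (k+2) → ℤ) × (Fin (k+2) → ℤ) |
      (∀ j, 0 ≤ rs.2 j ∧ rs.2 j < rs.1 j ∧ rs.1 j ≤ (H : ℤ) ∧
        Int.gcd (rs.1 j) (rs.2 j) = 1) ∧
      ∑ j, (rs.2 j : ℚ) / (rs.1 j : ℚ) = 1}.Finite := by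
    apply Set.Finite.subset (Set.Finite.prod
      (Set.Finite.pi (fun _ : Fin (k+2) => Set.finite_Icc (0:ℤ) H))
      (Set.Finite.pi (fun _ : Fin (k+2) => Set.finite_Icc (0:ℤ) H)))
    rintro rs ⟨h1, _⟩
    constructor
    · intro j _
      have := h1 j
      simp only [Set.mem_Icc]
      omega
    · intro j _
      have := h1 j
      simp only [Set.mem_Icc]
      omega
  haveI hfinT : Finite {rs : (Fin (k+2) → ℤ) × (Fin (k+2) → ℤ) //
      (∀ j, 0 ≤ rs.2 j ∧ rs.2 j < rs.1 j ∧ rs.1 j ≤ (H : ℤ) ∧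
        Int.gcd (rs.1 j) (rs.2 j) = 1) ∧
      ∑ j, (rs.2 j : ℚ) / (rs.1 j : ℚ) = 1} := hfin.to_subtype
  -- the solution set is nonempty
  have hne : Nonempty {rs : (Fin (k+2) → ℤ) × (Fin (k+2) → ℤ) //
      (∀ j, 0 ≤ rs.2 j ∧ rs.2 j < rs.1 j ∧ rs.1 j ≤ (H : ℤ) ∧
        Int.gcd (rs.1 j) (rs.2 j) = 1) ∧
      ∑ j, (rs.2 j : ℚ) / (rs.1 j : ℚ) = 1} := by
    refine ⟨⟨(fun j => if (j:ℕ) < 2 then 2 else 1, fun j => if (j:ℕ) < 2 then 1 else 0), ?_, ?_⟩⟩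
    · intro j
      dsimp only
      split_ifs with h
      · refine ⟨by norm_num, by norm_num, by exact_mod_cast hH, by norm_num⟩
      · refine ⟨le_refl 0, by norm_num, by exact_mod_cast (by omega : 1 ≤ H), by norm_num⟩
    · dsimp only
      set f : ℕ → ℚ := fun i => (if i < 2 then (1:ℚ) else 0) / (if i < 2 then (2:ℚ) else 1) with hf
      have hterm : ∀ j : Fin (k+2),
          (((if (j:ℕ) < 2 then (1:ℤ) else 0) : ℤ) : ℚ) / (((if (j:ℕ) < 2 then (2:ℤ) else 1) : ℤ) : ℚ)
          = f (j:ℕ) := by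
        intro j
        rw [hf]
        dsimp only
        split_ifs <;> norm_num
      rw [Finset.sum_congr rfl (fun j _ => hterm j), Fin.sum_univ_eq_sum_range f (k+2)]
      rw [Finset.sum_range_succ', Finset.sum_range_succ']
      have hz : ∀ i ∈ Finset.range k, f (i + 1 + 1) = 0 := by
        intro i _
        rw [hf]
        dsimp only
        rw [if_neg (by omega)]
        norm_num
      rw [Finset.sum_congr rfl hz]
      rw [hf]
      norm_num
  have hpos : 0 < Nat.card {rs : (Fin (k+2) → ℤ) × (Fin (k+2) → ℤ) //
      (∀ j, 0 ≤ rs.2 j ∧ rs.2 j < rs.1 j ∧ rs.1 j ≤ (H : ℤ) ∧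
        Int.gcd (rs.1 j) (rs.2 j) = 1) ∧
      ∑ j, (rs.2 j : ℚ) / (rs.1 j : ℚ) = 1} := Nat.card_pos
  rcases lt_or_ge H H₀ with hsmall | hbig
  · -- small H : count ≥ 1 suffices
    have h1 : (min c₁ c₂) * (H:ℝ)^(k+2) ≤ c₂ * (H₀:ℝ)^(k+2) := by
      have hHle : (H:ℝ) ≤ (H₀:ℝ) := by exact_mod_cast hsmall.le
      have h2 : (H:ℝ)^(k+2) ≤ (H₀:ℝ)^(k+2) := by
        apply pow_le_pow_left₀ (by positivity) hHle
      have h3 : min c₁ c₂ ≤ c₂ := min_le_right _ _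
      have h4 : (0:ℝ) ≤ min c₁ c₂ := le_min (by positivity) (by positivity)
      exact mul_le_mul h3 h2 (by positivity) (by positivity)
    have h5 : c₂ * (H₀:ℝ)^(k+2) = 1 := by
      rw [hc₂, div_pow, one_pow]
      field_simp
    calc (min c₁ c₂) * (H:ℝ)^(k+2) ≤ 1 := by rw [← h5]; exact h1
      _ ≤ _ := by exact_mod_cast hpos
  · -- main construction
    set A : ℕ := H / (2*(k+2)) with hA
    have h2k : 2*(k+2) ≤ H := by omega
    have hA1 : 1 ≤ A := by
      rw [hA, Nat.le_div_iff_mul_le (by omega : 0 < 2*(k+2))]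
      omega
    have hAH : A ≤ H := Nat.div_le_self _ _
    have hH4096 : 4096 ≤ H := by omega
    have hkA : (k+2) * A ≤ H/2 := by
      rw [hA, ← Nat.div_div_eq_div_mul, mul_comm]
      exact Nat.div_mul_le_self _ _
    set Cset := ((Finset.Ioc 0 A ×ˢ Finset.Ioc (H/2) H).filter
      (fun p => Nat.gcd p.1 p.2 = 1)) with hCset
    set piF := (Fintype.piFinset fun _ : Fin k => Finset.Ioc 0 A) with hpiF
    set Tset := Cset ×ˢ piF with hTset
    have hmem : ∀ x ∈ Tset, ((∀ j, 0 ≤ (phiMap k x).2 j ∧ (phiMap k x).2 j < (phiMap k x).1 j ∧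
        (phiMap k x).1 j ≤ (H : ℤ) ∧ Int.gcd ((phiMap k x).1 j) ((phiMap k x).2 j) = 1) ∧
        ∑ j, ((phiMap k x).2 j : ℚ) / ((phiMap k x).1 j : ℚ) = 1) := by
      rintro ⟨⟨a₀, b⟩, v⟩ hx
      simp only [hTset, hCset, Finset.mem_product, Finset.mem_filter, Finset.mem_Ioc] at hx
      obtain ⟨⟨⟨⟨ha0, haA⟩, ⟨hbl, hbu⟩⟩, hgcd1⟩, hvmem⟩ := hx
      have hv : ∀ i, 0 < v i ∧ v i ≤ A := by
        intro i
        have := (Fintype.mem_piFinset.mp hvmem) i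
        rwa [Finset.mem_Ioc] at this
      have hb0 : 0 < b := by omega
      have hbQ : ((b:ℕ):ℚ) ≠ 0 := by exact_mod_cast hb0.ne'
      have hnb := nume_bounds k a₀ b A (H/2) v ha0 haA hv hkA hbl
      have hSig : a₀ + ∑ i ∈ Finset.range k, wext k v i ≤ b := by
        have h1 := sum_wext_le k A v (fun i => (hv i).2)
        have h2 : a₀ + k*A ≤ (k+2)*A := by rw [add_mul]; linarith
        omega
      have hg0 : ∀ j : Fin (k+2), 0 < Nat.gcd b (nume k a₀ b v (j:ℕ)) :=
        fun j => Nat.gcd_pos_of_pos_left _ hb0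
      constructor
      · intro j
        have hjk : (j:ℕ) ≤ k+1 := by omega
        obtain ⟨hn0, hnb'⟩ := hnb (j:ℕ) hjk
        simp only [phiMap]
        refine ⟨by positivity, ?_, ?_, ?_⟩
        · exact_mod_cast Nat.div_lt_div_of_lt_of_dvd (Nat.gcd_dvd_left b _) hnb'
        · exact_mod_cast le_trans (Nat.div_le_self _ _) hbu
        · rw [Int.gcd_natCast_natCast]
          exact Nat.coprime_div_gcd_div_gcd (hg0 j)
      · simp only [phiMap]
        have hterm : ∀ j : Fin (k+2),
            (((nume k a₀ b v (j:ℕ) / Nat.gcd b (nume k a₀ b v (j:ℕ)) : ℕ) : ℤ) : ℚ) /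
            (((b / Nat.gcd b (nume k a₀ b v (j:ℕ)) : ℕ) : ℤ) : ℚ)
            = ((nume k a₀ b v (j:ℕ) : ℕ) : ℚ) / ((b:ℕ):ℚ) := by
          intro j
          have hgQ : ((Nat.gcd b (nume k a₀ b v (j:ℕ)) : ℕ) : ℚ) ≠ 0 := by
            exact_mod_cast (hg0 j).ne'
          simp only [Int.cast_natCast]
          rw [Nat.cast_div (Nat.gcd_dvd_right b _) hgQ,
            Nat.cast_div (Nat.gcd_dvd_left b _) hgQ,
            div_div_div_cancel_right₀]
          exact hgQ
        rw [Finset.sum_congr rfl (fun j _ => hterm j), ← Finset.sum_div]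
        have hs : ∑ j : Fin (k+2), ((nume k a₀ b v (j:ℕ) : ℕ):ℚ)
            = ((∑ i ∈ Finset.range (k+2), nume k a₀ b v i : ℕ):ℚ) := by
          rw [Nat.cast_sum]
          exact Fin.sum_univ_eq_sum_range (fun i => ((nume k a₀ b v i : ℕ):ℚ)) (k+2)
        rw [hs, sum_nume k a₀ b v hSig]
        exact div_self hbQ
    have hinj : ∀ x ∈ Tset, ∀ y ∈ Tset, phiMap k x = phiMap k y → x = y := by
      rintro ⟨⟨a₀, b⟩, v⟩ hx ⟨⟨a₀', b'⟩, v'⟩ hy heq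
      simp only [hTset, hCset, Finset.mem_product, Finset.mem_filter, Finset.mem_Ioc] at hx hy
      obtain ⟨⟨⟨⟨ha0, haA⟩, ⟨hbl, hbu⟩⟩, hgcd1⟩, hvmem⟩ := hx
      obtain ⟨⟨⟨⟨ha0', haA'⟩, ⟨hbl', hbu'⟩⟩, hgcd1'⟩, hvmem'⟩ := hy
      have hb0 : 0 < b := by omega
      have hb0' : 0 < b' := by omega
      have e1 := congrFun (congrArg Prod.fst heq) ⟨0, by omega⟩
      have e2 := congrFun (congrArg Prod.snd heq) ⟨0, by omega⟩
      simp only [phiMap] at e1 e2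
      rw [nume_zero, nume_zero] at e1 e2
      have hg1 : Nat.gcd b a₀ = 1 := by rwa [Nat.gcd_comm]
      have hg1' : Nat.gcd b' a₀' = 1 := by rwa [Nat.gcd_comm]
      rw [hg1, hg1', Nat.div_one, Nat.div_one] at e1 e2
      have hbb : b = b' := by exact_mod_cast e1
      have haa : a₀ = a₀' := by exact_mod_cast e2
      subst hbb
      subst haa
      have hvv : v = v' := by
        funext i
        have e3 := congrFun (congrArg Prod.fst heq) ⟨i.1+1, by omega⟩
        have e4 := congrFun (congrArg Prod.snd heq) ⟨i.1+1, by omega⟩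
        simp only [phiMap] at e3 e4
        have hnv : nume k a₀ b v (i.1+1) = v i := by
          rw [nume_mid k a₀ b v (i.1+1) (by omega) (by omega)]
          exact congrArg v (Fin.ext rfl)
        have hnv' : nume k a₀ b v' (i.1+1) = v' i := by
          rw [nume_mid k a₀ b v' (i.1+1) (by omega) (by omega)]
          exact congrArg v' (Fin.ext rfl)
        rw [hnv, hnv'] at e3 e4
        have e3' : b / Nat.gcd b (v i) = b / Nat.gcd b (v' i) := by exact_mod_cast e3
        have e4' : v i / Nat.gcd b (v i) = v' i / Nat.gcd b (v' i) := by exact_mod_cast e4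
        have hgg : Nat.gcd b (v i) = Nat.gcd b (v' i) := by
          have d1 : Nat.gcd b (v i) ∣ b := Nat.gcd_dvd_left _ _
          have d2 : Nat.gcd b (v' i) ∣ b := Nat.gcd_dvd_left _ _
          calc Nat.gcd b (v i) = b / (b / Nat.gcd b (v i)) :=
                (Nat.div_div_self d1 hb0.ne').symm
            _ = b / (b / Nat.gcd b (v' i)) := by rw [e3']
            _ = Nat.gcd b (v' i) := Nat.div_div_self d2 hb0.ne'
        calc v i = (v i / Nat.gcd b (v i)) * Nat.gcd b (v i) :=
              (Nat.div_mul_cancel (Nat.gcd_dvd_right _ _)).symm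
          _ = (v' i / Nat.gcd b (v' i)) * Nat.gcd b (v' i) := by rw [e4', hgg]
          _ = v' i := Nat.div_mul_cancel (Nat.gcd_dvd_right _ _)
      rw [hvv]
    have hcard : Tset.card ≤ Nat.card {rs : (Fin (k+2) → ℤ) × (Fin (k+2) → ℤ) //
        (∀ j, 0 ≤ rs.2 j ∧ rs.2 j < rs.1 j ∧ rs.1 j ≤ (H : ℤ) ∧
          Int.gcd (rs.1 j) (rs.2 j) = 1) ∧
        ∑ j, (rs.2 j : ℚ) / (rs.1 j : ℚ) = 1} := by
      have hf : Function.Injective (fun x : {x // x ∈ Tset} =>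
          (⟨phiMap k x.1, hmem x.1 x.2⟩ : {rs : (Fin (k+2) → ℤ) × (Fin (k+2) → ℤ) //
            (∀ j, 0 ≤ rs.2 j ∧ rs.2 j < rs.1 j ∧ rs.1 j ≤ (H : ℤ) ∧
              Int.gcd (rs.1 j) (rs.2 j) = 1) ∧
            ∑ j, (rs.2 j : ℚ) / (rs.1 j : ℚ) = 1})) := by
        intro x y hxy
        have h := congrArg Subtype.val hxy
        exact Subtype.ext (hinj x.1 x.2 y.1 y.2 h)
      calc Tset.card = Nat.card {x // x ∈ Tset} := (Nat.card_eq_finsetCard _).symm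
        _ ≤ _ := Nat.card_le_card_of_injective _ hf
    have hTcard : Tset.card = Cset.card * A^k := by
      rw [hTset, Finset.card_product, hpiF, Fintype.card_piFinset]
      congr 1
      simp [Nat.card_Ioc]
    have hC := coprime_count A H hA1 hAH hH4096
    have hHr : (4096:ℝ)*((k:ℝ)+2) ≤ (H:ℝ) := by exact_mod_cast hbig
    have hm4 : (H:ℝ)/m ≤ (A:ℝ) := by
      have h1 : (H:ℝ)/(2*((k:ℝ)+2)) - 1 ≤ (A:ℝ) := by
        have h := cast_div_ge (a := H) (d := 2*(k+2)) (by omega)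
        rw [hA]
        convert h using 2
        push_cast
        ring
      have h2 : (1:ℝ) ≤ (H:ℝ)/(4*((k:ℝ)+2)) := by
        rw [le_div_iff₀ (by positivity)]
        linarith
      have h3 : (H:ℝ)/(2*((k:ℝ)+2)) - (H:ℝ)/(4*((k:ℝ)+2)) = (H:ℝ)/(4*((k:ℝ)+2)) := by
        field_simp
        ring
      rw [hm]
      linarith
    have hpow : ((H:ℝ)/m)^(k+1) ≤ (A:ℝ)^(k+1) := pow_le_pow_left₀ (by positivity) hm4 _
    have hc1H : c₁ * (H:ℝ)^(k+2) ≤ ((H:ℝ)/16) * ((A:ℝ))^(k+1) := by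
      have e : c₁ * (H:ℝ)^(k+2) = ((H:ℝ)/16) * ((H:ℝ)/m)^(k+1) := by
        rw [hc₁, div_pow, div_pow, one_pow, pow_succ]
        ring
      rw [e]
      exact mul_le_mul_of_nonneg_left hpow (by positivity)
    have hfinal : ((H:ℝ)/16) * (A:ℝ)^(k+1) ≤ ((Tset.card : ℕ):ℝ) := by
      rw [hTcard]
      push_cast
      have e2 : ((H:ℝ)/16) * (A:ℝ)^(k+1) = ((A:ℝ)*H/16) * (A:ℝ)^k := by
        rw [pow_succ]
        ring
      rw [e2]
      exact mul_le_mul_of_nonneg_right hC (by positivity)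
    have hcast : ((Tset.card:ℕ):ℝ) ≤ (Nat.card {rs : (Fin (k+2) → ℤ) × (Fin (k+2) → ℤ) //
        (∀ j, 0 ≤ rs.2 j ∧ rs.2 j < rs.1 j ∧ rs.1 j ≤ (H : ℤ) ∧
          Int.gcd (rs.1 j) (rs.2 j) = 1) ∧
        ∑ j, (rs.2 j : ℚ) / (rs.1 j : ℚ) = 1} : ℝ) := by exact_mod_cast hcard
    calc (min c₁ c₂) * (H:ℝ)^(k+2) ≤ c₁ * (H:ℝ)^(k+2) :=
          mul_le_mul_of_nonneg_right (min_le_left _ _) (by positivity)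
      _ ≤ ((H:ℝ)/16) * (A:ℝ)^(k+1) := hc1H
      _ ≤ ((Tset.card:ℕ):ℝ) := hfinal
      _ ≤ _ := hcast
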